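/- Let 𝒟 ⊆ 𝒞 be subcategories of 𝓑 satisfying condition (RCP), and set ℋ_𝒟 := CoCone(𝒟,𝒞). Then every object X of 𝓑 admits a short exact sequence 0→Z→Y→f→X→0 in which Y ∈ ℋ_𝒟, the morphism f is a right ℋ_𝒟-approximation of X, and Z ∈ 𝒟^⊥¹. Moreover, for this f: any morphism x' : X → X' such that x'∘f factors through an object of 𝒞^⊥¹ itself factors through an object of 𝒞^⊥¹. -/

import Mathlib

open CategoryTheory Category Limits ZeroObject

universe v u

namespace CotorsionPaper

variable {B : Type u} [Category.{v} B] [Abelian B]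

/-- `f, g` form a short exact sequence `0 → X → Y → Z → 0`. -/
def IsSES {X Y Z : B} (f : X ⟶ Y) (g : Y ⟶ Z) : Prop :=
  ∃ w : f ≫ g = 0, (ShortComplex.mk f g w).ShortExact

/-- `Ext¹(X, Y) = 0`: every short exact sequence `0 → Y → E → X → 0` splits. -/
def Ext1Zero (X Y : B) : Prop :=
  ∀ ⦃E : B⦄ (i : Y ⟶ E) (p : E ⟶ X), IsSES i p → ∃ s : X ⟶ E, s ≫ p = 𝟙 X

/-- `Ext²(X, Y) = 0`, via dimension shifting: `Ext¹(K, Y) = 0` for any syzygy `K` of `X`. -/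
def Ext2Zero (X Y : B) : Prop :=
  ∀ ⦃K P : B⦄ (i : K ⟶ P) (p : P ⟶ X), Projective P → IsSES i p → Ext1Zero K Y

/-- A (strictly) full additive subcategory: closed under isomorphisms,
contains a zero object and is closed under finite direct sums. -/
structure AddSubcat (S : Set B) : Prop where
  zero_mem : (0 : B) ∈ S
  iso_closed : ∀ ⦃X Y : B⦄, (X ≅ Y) → X ∈ S → Y ∈ S
  sum_closed : ∀ ⦃X Y : B⦄, X ∈ S → Y ∈ S → (X ⊞ Y) ∈ S

/-- `S` is closed under direct summands (retracts). -/
def ClosedUnderSummands (S : Set B) : Prop :=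
  ∀ ⦃X Y : B⦄ (r : X ⟶ Y) (s : Y ⟶ X), s ≫ r = 𝟙 Y → X ∈ S → Y ∈ S

/-- `S` is rigid: `Ext¹(X, Y) = 0` for all `X, Y ∈ S`. -/
def Rigid (S : Set B) : Prop :=
  ∀ ⦃X⦄, X ∈ S → ∀ ⦃Y⦄, Y ∈ S → Ext1Zero X Y

/-- `S^⊥¹`. -/
def rightPerp (S : Set B) : Set B := {Y | ∀ ⦃X⦄, X ∈ S → Ext1Zero X Y}

/-- `^⊥¹S`. -/
def leftPerp (S : Set B) : Set B := {X | ∀ ⦃Y⦄, Y ∈ S → Ext1Zero X Y}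

/-- `f : X ⟶ A` is a right `S`-approximation of `A`. -/
def IsRightApprox (S : Set B) {X A : B} (f : X ⟶ A) : Prop :=
  X ∈ S ∧ ∀ ⦃X' : B⦄, X' ∈ S → ∀ g : X' ⟶ A, ∃ h : X' ⟶ X, h ≫ f = g

def ContravariantlyFinite (S : Set B) : Prop :=
  ∀ A : B, ∃ (X : B) (f : X ⟶ A), IsRightApprox S f

/-- `f : A ⟶ X` is a left `S`-approximation of `A`. -/
def IsLeftApprox (S : Set B) {A X : B} (f : A ⟶ X) : Prop :=
  X ∈ S ∧ ∀ ⦃X' : B⦄, X' ∈ S → ∀ g : A ⟶ X', ∃ h : X ⟶ X', f ≫ h = g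

def CovariantlyFinite (S : Set B) : Prop :=
  ∀ A : B, ∃ (X : B) (f : A ⟶ X), IsLeftApprox S f

/-- `(U, V)` is a cotorsion pair. -/
structure CotorsionPair (U V : Set B) : Prop where
  summands_left : ClosedUnderSummands U
  summands_right : ClosedUnderSummands V
  ext : ∀ ⦃X⦄, X ∈ U → ∀ ⦃Y⦄, Y ∈ V → Ext1Zero X Y
  resol : ∀ X : B, ∃ (VX UX : B) (i : VX ⟶ UX) (p : UX ⟶ X),
    VX ∈ V ∧ UX ∈ U ∧ IsSES i p
  coresol : ∀ X : B, ∃ (VX UX : B) (i : X ⟶ VX) (p : VX ⟶ UX),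
    VX ∈ V ∧ UX ∈ U ∧ IsSES i p

/-- `CoCone(S, T)`. -/
def CoCone (S T : Set B) : Set B :=
  {X | ∃ (B' B'' : B) (i : X ⟶ B') (p : B' ⟶ B''), B' ∈ S ∧ B'' ∈ T ∧ IsSES i p}

/-- `Cone(S, T)`. -/
def Cone (S T : Set B) : Set B :=
  {X | ∃ (B' B'' : B) (i : B' ⟶ B'') (p : B'' ⟶ X), B' ∈ S ∧ B'' ∈ T ∧ IsSES i p}

/-- The subcategory `𝒫` of projective objects. -/
def projSet : Set B := {P | Projective P}

/-- The subcategory `ℐ` of injective objects. -/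
def injSet : Set B := {I | Injective I}

/-- `Ω𝒞`, the (first) syzygy of `𝒞`. -/
def Syz (C : Set B) : Set B := CoCone projSet C

/-- Condition (RCP): `𝒫 ⊆ 𝒞`, `𝒞` rigid, contravariantly finite,
closed under direct summands (and a full additive subcategory). -/
structure RCP (C : Set B) : Prop where
  add : AddSubcat C
  proj_mem : ∀ ⦃P : B⦄, Projective P → P ∈ C
  rigid : Rigid C
  contra : ContravariantlyFinite C
  summands : ClosedUnderSummands C

/-- `f` factors through an object of `S`. -/
def FactorsThru (S : Set B) {X Y : B} (f : X ⟶ Y) : Prop :=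
  ∃ (Z : B) (g : X ⟶ Z) (h : Z ⟶ Y), Z ∈ S ∧ g ≫ h = f

/-- The ideal of morphisms of the full subcategory on `H` factoring through an object of `S`. -/
def idealRel (H S : Set B) : HomRel (ObjectProperty.FullSubcategory (fun X => X ∈ H)) :=
  fun X Y f g => FactorsThru S (show X.obj ⟶ Y.obj from f.hom - g.hom)

/-- The ideal quotient `H/S`. -/
abbrev HeartCat (H S : Set B) := CategoryTheory.Quotient (idealRel H S)

/-- The quotient functor `H → H/S`. -/
abbrev heartQ (H S : Set B) : ObjectProperty.FullSubcategory (fun X => X ∈ H) ⥤ HeartCat H S :=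
  CategoryTheory.Quotient.functor _

/-- The zero morphism in the ideal quotient `H/S`. -/
def heartZero (H S : Set B) (X Y : HeartCat H S) : X ⟶ Y :=
  (heartQ H S).map (0 : X.as ⟶ Y.as)

/-- `κ` is a kernel of `φ` in the ideal quotient `H/S`. -/
structure IsKernelArrow {H S : Set B} {K X Y : HeartCat H S}
    (κ : K ⟶ X) (φ : X ⟶ Y) : Prop where
  w : κ ≫ φ = heartZero H S K Y
  lift : ∀ ⦃T : HeartCat H S⦄ (t : T ⟶ X), t ≫ φ = heartZero H S T Y →
    ∃! u : T ⟶ K, u ≫ κ = t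

/-- `π` is a cokernel of `φ` in the ideal quotient `H/S`. -/
structure IsCokernelArrow {H S : Set B} {X Y Q : HeartCat H S}
    (φ : X ⟶ Y) (π : Y ⟶ Q) : Prop where
  w : φ ≫ π = heartZero H S X Q
  desc : ∀ ⦃T : HeartCat H S⦄ (t : Y ⟶ T), φ ≫ t = heartZero H S X T →
    ∃! u : Q ⟶ T, π ≫ u = t

/-- The class of epimorphisms in `H/S` whose kernel object lies in `A`. -/
def epiClassWithKernelIn (H S A : Set B) : MorphismProperty (HeartCat H S) :=
  fun X Y φ => Epi φ ∧ ∃ (K : HeartCat H S) (κ : K ⟶ X),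
    K.as.obj ∈ A ∧ IsKernelArrow κ φ

/-- The class of monomorphisms in `H/S` whose cokernel object lies in `A`. -/
def monoClassWithCokernelIn (H S A : Set B) : MorphismProperty (HeartCat H S) :=
  fun X Y φ => Mono φ ∧ ∃ (Q : HeartCat H S) (π : Y ⟶ Q),
    Q.as.obj ∈ A ∧ IsCokernelArrow φ π

/-- The diagram `(⋄)` associated with a morphism `f : Y ⟶ X`. -/
structure DiamondDiagram {Y X : B} (f : Y ⟶ X) {OmX PX Z₁ IY SgY Z₂ : B}
    (q : OmX ⟶ PX) (p : PX ⟶ X) (j : OmX ⟶ Z₁) (g : Z₁ ⟶ Y)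
    (i : Y ⟶ IY) (c : IY ⟶ SgY) (h : X ⟶ Z₂) (e : Z₂ ⟶ SgY)
    (u : Z₁ ⟶ PX) (v : IY ⟶ Z₂) : Prop where
  projPX : Projective PX
  injIY : Injective IY
  ses_proj : IsSES q p
  ses_pullback : IsSES j g
  ses_inj : IsSES i c
  ses_pushout : IsSES h e
  comm₁ : j ≫ u = q
  comm₂ : u ≫ p = g ≫ f
  comm₃ : f ≫ h = i ≫ v
  comm₄ : v ≫ e = c

/-- The class of morphisms `f : Y ⟶ X` admitting a diagram `(⋄)` with
`Z₁ ∈ ZCond` and `h` factoring through an object of `HCond`. -/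
def Rclass (ZCond HCond : Set B) : MorphismProperty B :=
  fun Y X f => ∃ (OmX PX Z₁ IY SgY Z₂ : B) (q : OmX ⟶ PX) (p : PX ⟶ X)
    (j : OmX ⟶ Z₁) (g : Z₁ ⟶ Y) (i : Y ⟶ IY) (c : IY ⟶ SgY)
    (h : X ⟶ Z₂) (e : Z₂ ⟶ SgY) (u : Z₁ ⟶ PX) (v : IY ⟶ Z₂),
    DiamondDiagram f q p j g i c h e u v ∧ Z₁ ∈ ZCond ∧ FactorsThru HCond h

/-- The class of morphisms `f : Y ⟶ X` admitting a diagram `(⋄)` with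
`g` factoring through an object of `GCond` and `h` through an object of `HCond`. -/
def RtildeClass (GCond HCond : Set B) : MorphismProperty B :=
  fun Y X f => ∃ (OmX PX Z₁ IY SgY Z₂ : B) (q : OmX ⟶ PX) (p : PX ⟶ X)
    (j : OmX ⟶ Z₁) (g : Z₁ ⟶ Y) (i : Y ⟶ IY) (c : IY ⟶ SgY)
    (h : X ⟶ Z₂) (e : Z₂ ⟶ SgY) (u : Z₁ ⟶ PX) (v : IY ⟶ Z₂),
    DiamondDiagram f q p j g i c h e u v ∧ FactorsThru GCond g ∧ FactorsThru HCond h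

/-- The objects of the heart `ℋ` of a cotorsion pair `(U, V)`. -/
def HeartObjects (U V : Set B) : Set B :=
  {X | (∃ (VX UX : B) (i : VX ⟶ UX) (p : UX ⟶ X),
          IsSES i p ∧ VX ∈ V ∧ UX ∈ U ∩ V) ∧
       (∃ (VX UX : B) (i : X ⟶ VX) (p : VX ⟶ UX),
          IsSES i p ∧ VX ∈ U ∩ V ∧ UX ∈ U)}


/-! ### Auxiliary lemmas -/

section Aux

namespace IsSES

theorem zero {X Y Z : B} {f : X ⟶ Y} {g : Y ⟶ Z} (h : IsSES f g) : f ≫ g = 0 := h.1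

theorem mono {X Y Z : B} {f : X ⟶ Y} {g : Y ⟶ Z} (h : IsSES f g) : Mono f := h.2.mono_f

theorem epi {X Y Z : B} {f : X ⟶ Y} {g : Y ⟶ Z} (h : IsSES f g) : Epi g := h.2.epi_g

theorem lift' {X Y Z : B} {f : X ⟶ Y} {g : Y ⟶ Z} (h : IsSES f g) {A : B} (k : A ⟶ Y)
    (hk : k ≫ g = 0) : ∃ l : A ⟶ X, l ≫ f = k := by
  have := h.mono
  exact h.2.exact.lift' k hk

theorem desc' {X Y Z : B} {f : X ⟶ Y} {g : Y ⟶ Z} (h : IsSES f g) {A : B} (k : Y ⟶ A)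
    (hk : f ≫ k = 0) : ∃ l : Z ⟶ A, g ≫ l = k := by
  have := h.epi
  exact h.2.exact.desc' k hk

theorem mk_of_ker {X Y Z : B} {f : X ⟶ Y} {g : Y ⟶ Z} (hf : Mono f) (hg : Epi g)
    (w : f ≫ g = 0)
    (h : ∀ {A : B} (k : A ⟶ Y), k ≫ g = 0 → ∃ l : A ⟶ X, l ≫ f = k) : IsSES f g := by
  refine ⟨w, ShortComplex.ShortExact.mk' ?_ hf hg⟩
  exact ShortComplex.exact_of_f_is_kernel _
    (KernelFork.IsLimit.ofι' f w (fun k hk => ⟨(h k hk).choose, (h k hk).choose_spec⟩))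

theorem mk_of_coker {X Y Z : B} {f : X ⟶ Y} {g : Y ⟶ Z} (hf : Mono f) (hg : Epi g)
    (w : f ≫ g = 0)
    (h : ∀ {A : B} (k : Y ⟶ A), f ≫ k = 0 → ∃ l : Z ⟶ A, g ≫ l = k) : IsSES f g := by
  refine ⟨w, ShortComplex.ShortExact.mk' ?_ hf hg⟩
  exact ShortComplex.exact_of_g_is_cokernel _
    (CokernelCofork.IsColimit.ofπ' g w (fun k hk => ⟨(h k hk).choose, (h k hk).choose_spec⟩))

theorem precomp_iso {X X' Y Z : B} (e : X' ≅ X) {f : X ⟶ Y} {g : Y ⟶ Z} (h : IsSES f g) :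
    IsSES (e.hom ≫ f) g := by
  have := h.mono
  refine mk_of_ker inferInstance h.epi (by rw [assoc, h.zero, comp_zero]) ?_
  intro A k hk
  obtain ⟨l, hl⟩ := h.lift' k hk
  exact ⟨l ≫ e.inv, by rw [assoc, e.inv_hom_id_assoc, hl]⟩

theorem section_of_retraction {X Y Z : B} {f : X ⟶ Y} {g : Y ⟶ Z} (h : IsSES f g)
    {r : Y ⟶ X} (hr : f ≫ r = 𝟙 X) : ∃ s : Z ⟶ Y, s ≫ g = 𝟙 Z := by
  have := h.epi
  obtain ⟨l, hl⟩ := h.desc' (𝟙 Y - r ≫ f)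
    (by rw [Preadditive.comp_sub, comp_id, ← assoc, hr, id_comp, sub_self])
  refine ⟨l, ?_⟩
  rw [← cancel_epi g, ← assoc, hl, Preadditive.sub_comp, id_comp, assoc, h.zero, comp_zero, sub_zero,
    comp_id]

theorem retraction_of_section {X Y Z : B} {f : X ⟶ Y} {g : Y ⟶ Z} (h : IsSES f g)
    {s : Z ⟶ Y} (hs : s ≫ g = 𝟙 Z) : ∃ r : Y ⟶ X, f ≫ r = 𝟙 X := by
  have := h.mono
  obtain ⟨l, hl⟩ := h.lift' (𝟙 Y - g ≫ s)
    (by rw [Preadditive.sub_comp, id_comp, assoc, hs, comp_id, sub_self])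
  refine ⟨l, ?_⟩
  rw [← cancel_mono f, assoc, hl, Preadditive.comp_sub, comp_id, ← assoc, h.zero, zero_comp, sub_zero,
    id_comp]

theorem pullbackSES {Z E X T : B} {k : Z ⟶ E} {g : E ⟶ X} (h : IsSES k g) (y : T ⟶ X) :
    ∃ l : Z ⟶ pullback g y, l ≫ pullback.fst g y = k ∧ IsSES l (pullback.snd g y) := by
  have := h.epi
  have := h.mono
  refine ⟨pullback.lift k 0 (by rw [h.zero, zero_comp]), pullback.lift_fst _ _ _, ?_⟩
  have hm : Mono (pullback.lift k 0 (by rw [h.zero, zero_comp]) ≫ pullback.fst g y) := by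
    rw [pullback.lift_fst]; infer_instance
  refine mk_of_ker (mono_of_mono _ (pullback.fst g y)) inferInstance
    (pullback.lift_snd _ _ _) ?_
  intro A u hu
  obtain ⟨v, hv⟩ := h.lift' (u ≫ pullback.fst g y)
    (by rw [assoc, pullback.condition, ← assoc, hu, zero_comp])
  refine ⟨v, pullback.hom_ext ?_ ?_⟩
  · rw [assoc, pullback.lift_fst, hv]
  · rw [assoc, pullback.lift_snd, comp_zero, hu]

theorem pushoutSES {A E C T : B} {a : A ⟶ E} {b : E ⟶ C} (h : IsSES a b) (t : A ⟶ T) :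
    ∃ d : pushout a t ⟶ C, pushout.inl a t ≫ d = b ∧ IsSES (pushout.inr a t) d := by
  have := h.epi
  have := h.mono
  refine ⟨pushout.desc b 0 (by rw [h.zero, comp_zero]), pushout.inl_desc _ _ _, ?_⟩
  refine mk_of_coker inferInstance
    (epi_of_epi_fac (pushout.inl_desc b 0 (by rw [h.zero, comp_zero])))
    (pushout.inr_desc _ _ _) ?_
  intro V u hu
  obtain ⟨w, hw⟩ := h.desc' (pushout.inl a t ≫ u)
    (by rw [← assoc, pushout.condition, assoc, hu, comp_zero])
  refine ⟨w, pushout.hom_ext ?_ ?_⟩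
  · rw [← assoc, pushout.inl_desc, hw]
  · rw [← assoc, pushout.inr_desc, zero_comp, hu]

end IsSES

theorem lift_of_ext1 {Z E X T : B} {k : Z ⟶ E} {g : E ⟶ X} (h : IsSES k g) (y : T ⟶ X)
    (hext : Ext1Zero T Z) : ∃ l : T ⟶ E, l ≫ g = y := by
  obtain ⟨l, _, hP⟩ := h.pullbackSES y
  obtain ⟨s, hs⟩ := hext l _ hP
  exact ⟨s ≫ pullback.fst g y, by rw [assoc, pullback.condition, ← assoc, hs, id_comp]⟩

theorem extend_of_ext1 {A E C T : B} {a : A ⟶ E} {b : E ⟶ C} (h : IsSES a b) (t : A ⟶ T)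
    (hext : Ext1Zero C T) : ∃ t' : E ⟶ T, a ≫ t' = t := by
  obtain ⟨d, _, hQ⟩ := h.pushoutSES t
  obtain ⟨s, hs⟩ := hext (pushout.inr a t) d hQ
  obtain ⟨r, hr⟩ := hQ.retraction_of_section hs
  exact ⟨pushout.inl a t ≫ r, by rw [← assoc, pushout.condition, assoc, hr, comp_id]⟩

theorem ext1Zero_of_injective {I : B} (hI : Injective I) (X : B) : Ext1Zero X I := by
  intro E i p hses
  have := hses.mono
  have := hI
  exact hses.section_of_retraction (Injective.comp_factorThru (𝟙 I) i)

theorem rightPerp_iso {S : Set B} {Y Y' : B} (e : Y ≅ Y') (h : Y ∈ rightPerp S) :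
    Y' ∈ rightPerp S := by
  intro X hX E i p hses
  exact h hX (e.hom ≫ i) p (hses.precomp_iso e)

theorem rightPerp_extension {S : Set B} {A M C : B} {a : A ⟶ M} {b : M ⟶ C}
    (hab : IsSES a b) (hA : A ∈ rightPerp S) (hC : C ∈ rightPerp S) : M ∈ rightPerp S := by
  intro X hX E m p hMses
  have hma := hab.mono
  have hmm := hMses.mono
  have heb := hab.epi
  -- pushout of the SES `0 → M → E → X → 0` along `b : M → C`
  obtain ⟨d, hinld, hQses⟩ := hMses.pushoutSES b
  -- the SES `0 → A → E → Q → 0`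
  have hinlepi : Epi (pushout.inl m b) := by
    constructor
    intro V u v huv
    refine pushout.hom_ext huv ?_
    rw [← cancel_epi b, ← assoc, ← pushout.condition, assoc, huv, ← assoc,
      pushout.condition, assoc]
  have hses2 : IsSES (a ≫ m) (pushout.inl m b) := by
    refine IsSES.mk_of_coker inferInstance hinlepi
      (by rw [assoc, pushout.condition, ← assoc, hab.zero, zero_comp]) ?_
    intro V u hu
    obtain ⟨w, hw⟩ := hab.desc' (m ≫ u) (by rw [← assoc]; exact hu)
    exact ⟨pushout.desc u w hw.symm, pushout.inl_desc _ _ _⟩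
  obtain ⟨s, hs⟩ := hC hX (pushout.inr m b) d hQses
  obtain ⟨l, _, hPses⟩ := hses2.pullbackSES s
  obtain ⟨σ', hσ'⟩ := hA hX l _ hPses
  refine ⟨σ' ≫ pullback.fst (pushout.inl m b) s, ?_⟩
  have hp : p = pushout.inl m b ≫ d := hinld.symm
  rw [assoc, hp, ← assoc (pullback.fst _ _), pullback.condition, assoc, hs, comp_id, hσ']

theorem approx_epi {S : Set B} [EnoughProjectives B] (hP : ∀ ⦃P : B⦄, Projective P → P ∈ S)
    {S₀ X : B} {α : S₀ ⟶ X} (hα : IsRightApprox S α) : Epi α := by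
  obtain ⟨h, hh⟩ := hα.2 (hP (Projective.projective_over X)) (Projective.π X)
  exact epi_of_epi_fac hh

theorem wakamatsu {S : Set B} (hrig : Rigid S) {V S₀ X : B} {k : V ⟶ S₀} {α : S₀ ⟶ X}
    (happ : IsRightApprox S α) (hses : IsSES k α) : V ∈ rightPerp S := by
  intro C' hC' E a b hE
  obtain ⟨φ, hφ⟩ := extend_of_ext1 hE k (hrig hC' happ.1)
  obtain ⟨t, ht⟩ := hE.desc' (φ ≫ α) (by rw [← assoc, hφ, hses.zero])
  obtain ⟨t', ht'⟩ := happ.2 hC' t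
  obtain ⟨ρ, hρ⟩ := hses.lift' (φ - b ≫ t') (by rw [Preadditive.sub_comp, assoc, ht', ht, sub_self])
  have := hses.mono
  have hretr : a ≫ ρ = 𝟙 V := by
    rw [← cancel_mono k, assoc, hρ, Preadditive.comp_sub, hφ, ← assoc, hE.zero, zero_comp, sub_zero,
      id_comp]
  exact hE.section_of_retraction hretr

theorem rcp_approx {S : Set B} (hS : RCP S) [EnoughProjectives B] (T : B) :
    ∃ (V S₀ : B) (k : V ⟶ S₀) (α : S₀ ⟶ T),
      IsSES k α ∧ IsRightApprox S α ∧ V ∈ rightPerp S ∧ S₀ ∈ S := by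
  obtain ⟨S₀, α, hα⟩ := hS.contra T
  have hepi : Epi α := approx_epi hS.proj_mem hα
  have hses : IsSES (kernel.ι α) α := by
    refine ⟨kernel.condition α, ShortComplex.ShortExact.mk' ?_ inferInstance hepi⟩
    exact ShortComplex.exact_of_f_is_kernel _ (kernelIsKernel α)
  exact ⟨_, _, _, _, hses, hα, wakamatsu hS.rigid hα hses, hα.1⟩

theorem rcp_coresolution {S : Set B} (hS : RCP S) [EnoughProjectives B] [EnoughInjectives B]
    (X : B) : ∃ (Z' S' : B) (x : X ⟶ Z') (σ : Z' ⟶ S'),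
      IsSES x σ ∧ Z' ∈ rightPerp S ∧ S' ∈ S := by
  have hιπ : IsSES (Injective.ι X) (cokernel.π (Injective.ι X)) := by
    refine ⟨cokernel.condition _, ShortComplex.ShortExact.mk' ?_ (Injective.ι_mono X)
      inferInstance⟩
    exact ShortComplex.exact_of_g_is_cokernel _ (cokernelIsCokernel _)
  obtain ⟨V, S₁, k, α, hVses, happ, hV, hS₁⟩ := rcp_approx hS (cokernel (Injective.ι X))
  obtain ⟨x, _, hxses⟩ := hιπ.pullbackSES α
  obtain ⟨l₂, _, hP₂ses⟩ := hVses.pullbackSES (cokernel.π (Injective.ι X))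
  have hP₂ : pullback α (cokernel.π (Injective.ι X)) ∈ rightPerp S :=
    rightPerp_extension hP₂ses hV
      (fun Y hY => ext1Zero_of_injective (Injective.injective_under X) Y)
  exact ⟨_, S₁, x, pullback.snd _ α, hxses,
    rightPerp_iso (pullbackSymmetry α (cokernel.π (Injective.ι X))) hP₂, hS₁⟩

end Aux

/-- right `ℋ_𝒟`-approximations with kernel in `𝒟^⊥¹`. -/
theorem statement_4 {B : Type u} [Category.{v} B] [Abelian B]
    [EnoughProjectives B] [EnoughInjectives B]
    (C D : Set B) (hC : RCP C) (hD : RCP D) (hDC : D ⊆ C) :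
    ∀ X : B, ∃ (Z Y : B) (i : Z ⟶ Y) (f : Y ⟶ X),
      IsSES i f ∧ Y ∈ CoCone D C ∧ IsRightApprox (CoCone D C) f ∧ Z ∈ rightPerp D ∧
      (∀ ⦃X' : B⦄ (x' : X ⟶ X'), FactorsThru (rightPerp C) (f ≫ x') →
        FactorsThru (rightPerp C) x') := by
  intro X
  obtain ⟨Z', C', x, σ, hxσ, hZ', hC'⟩ := rcp_coresolution hC X
  obtain ⟨W₀, D₁, k, d, hkd, hdapp, hW₀, hD₁⟩ := rcp_approx hD Z'
  obtain ⟨l, hlfst, hYses⟩ := hkd.pullbackSES x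
  have hcond : pullback.fst d x ≫ d = pullback.snd d x ≫ x := pullback.condition
  have hxm := hxσ.mono
  have hde := hkd.epi
  have hσe := hxσ.epi
  -- the SES `0 → Y → D₁ → C' → 0`
  have hmonofst : Mono (pullback.fst d x) := by
    constructor
    intro T u v huv
    refine pullback.hom_ext huv ?_
    rw [← cancel_mono x, assoc, assoc, ← hcond, ← assoc, ← assoc, huv]
  have hYDC : IsSES (pullback.fst d x) (d ≫ σ) := by
    refine IsSES.mk_of_ker hmonofst (epi_comp d σ)
      (by rw [← assoc, hcond, assoc, hxσ.zero, comp_zero]) ?_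
    intro A u hu
    obtain ⟨w', hw'⟩ := hxσ.lift' (u ≫ d) (by rw [assoc]; exact hu)
    exact ⟨pullback.lift u w' hw'.symm, pullback.lift_fst _ _ _⟩
  have hYmem : pullback d x ∈ CoCone D C :=
    ⟨D₁, C', pullback.fst d x, d ≫ σ, hD₁, hC', hYDC⟩
  refine ⟨W₀, pullback d x, l, pullback.snd d x, hYses, hYmem, ⟨hYmem, ?_⟩, hW₀, ?_⟩
  · rintro W' ⟨D₀, C₀, j, q, hD₀, hC₀, hjq⟩ y
    obtain ⟨t', ht'⟩ := extend_of_ext1 hjq (y ≫ x) (hZ' hC₀)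
    obtain ⟨a', ha'⟩ := hdapp.2 hD₀ t'
    refine ⟨pullback.lift (j ≫ a') y (by rw [assoc, ha', ht']), pullback.lift_snd _ _ _⟩
  · rintro X' x' ⟨Z₀, g₁, h₁, hZ₀, hfac⟩
    obtain ⟨δ, hinlδ, hQses⟩ := hxσ.pushoutSES x'
    obtain ⟨gt, hgt⟩ := extend_of_ext1 hYDC g₁ (hZ₀ hC')
    have hfstm : pullback.fst d x ≫
        (d ≫ pushout.inl x x' - gt ≫ (h₁ ≫ pushout.inr x x')) = 0 := by
      rw [Preadditive.comp_sub, ← assoc, hcond, ← assoc, hgt, assoc, pushout.condition,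
        ← assoc, ← assoc, hfac, sub_self]
    obtain ⟨n, hn⟩ := hYDC.desc' _ hfstm
    have hepi : Epi (d ≫ σ) := epi_comp d σ
    have hnδ : n ≫ δ = 𝟙 C' := by
      rw [← cancel_epi (d ≫ σ), ← assoc, hn, Preadditive.sub_comp, assoc, assoc, assoc,
        hQses.zero, comp_zero, comp_zero, sub_zero, assoc, hinlδ, comp_id]
    obtain ⟨r, hr⟩ := hQses.retraction_of_section hnδ
    exact ⟨Z', x, pushout.inl x x' ≫ r, hZ',
      by rw [← assoc, pushout.condition, assoc, hr, comp_id]⟩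

end CotorsionPaper
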